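/- Let G be a circular arc graph admitting a representation F whose minimum circular cover number L(F) exceeds 4 (in particular, if the maximum circular cover number L_max(G) > 4). Then the boxicity of G is at most 3. -/

import Mathlib

noncomputable section

/-- The circle of circumference `2π`, as `ℝ / 2πℤ`. -/
abbrev Circle2pi := AddCircle (2 * Real.pi)

/-- The closed arc traversed clockwise (decreasing angle) from the angle `s`
(its left endpoint) through angular length `ℓ`; its right endpoint is `s - ℓ`. -/
def arcSet (s ℓ : ℝ) : Set Circle2pi :=
  (fun t : ℝ => ((s - t : ℝ) : Circle2pi)) '' Set.Icc 0 ℓ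

/-- `f` is a circular-arc representation of `G`: each vertex gets a (start angle, length)
pair describing a proper closed arc, and distinct vertices are adjacent iff
their arcs intersect. -/
def IsCARep {V : Type*} (G : SimpleGraph V) (f : V → ℝ × ℝ) : Prop :=
  (∀ v, 0 < (f v).2 ∧ (f v).2 < 2 * Real.pi) ∧
  ∀ u v, u ≠ v →
    (G.Adj u v ↔ (arcSet (f u).1 (f u).2 ∩ arcSet (f v).1 (f v).2).Nonempty)

/-- `box(G) ≤ k`: `G` is the intersection of `k` interval graphs on `V`. -/
def BoxicityLE {V : Type*} (G : SimpleGraph V) (k : ℕ) : Prop :=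
  ∃ I : Fin k → V → Set ℝ,
    (∀ i v, ∃ a b : ℝ, a ≤ b ∧ I i v = Set.Icc a b) ∧
    ∀ u v : V, u ≠ v → (G.Adj u v ↔ ∀ i, (I i u ∩ I i v).Nonempty)

/-- Reflection of the circle across the line through the center at angle `θ`. -/
def reflMap (θ : ℝ) : Circle2pi → Circle2pi := fun p => ((2 * θ : ℝ) : Circle2pi) - p

/-- The open sector `S_k` (numbered anticlockwise from the positive x-axis):
points of the circle with angle strictly between `πk/α` and `π(k+1)/α`. -/
def sector (α : ℕ) (k : ℤ) : Set Circle2pi :=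
  (fun t : ℝ => (t : Circle2pi)) '' Set.Ioo (Real.pi * k / α) (Real.pi * (k + 1) / α)

/-- Signed coordinate of a point of the circle when orthogonally projected onto the
line through the center at angle `θ` (identified with ℝ). -/
def projCoord (θ : ℝ) : Circle2pi → ℝ :=
  Function.Periodic.lift
    (f := fun x : ℝ => Real.cos (x - θ))
    (fun x => by simp only []; rw [show x + 2 * Real.pi - θ = (x - θ) + 2 * Real.pi by ring,
      Real.cos_add_two_pi])


namespace S19

lemma htp : (0:ℝ) < 2 * Real.pi := by positivity

lemma coe_eq {x y : ℝ} :
    (x : Circle2pi) = (y : Circle2pi) ↔ ∃ n : ℤ, x - y = n * (2 * Real.pi) := by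
  rw [← sub_eq_zero, ← QuotientAddGroup.mk_sub, AddCircle.coe_eq_zero_iff]
  constructor
  · rintro ⟨n, hn⟩; exact ⟨n, by rw [← hn]; simp [zsmul_eq_mul]⟩
  · rintro ⟨n, hn⟩; exact ⟨n, by rw [hn]; simp [zsmul_eq_mul]⟩

lemma mem_arc {q : Circle2pi} {s ℓ : ℝ} :
    q ∈ arcSet s ℓ ↔ ∃ t : ℝ, 0 ≤ t ∧ t ≤ ℓ ∧ q = ((s - t : ℝ) : Circle2pi) := by
  constructor
  · rintro ⟨t, ⟨ht0, ht1⟩, rfl⟩; exact ⟨t, ht0, ht1, rfl⟩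
  · rintro ⟨t, ht0, ht1, rfl⟩; exact ⟨t, ⟨ht0, ht1⟩, rfl⟩

/-- the unique parameter of the point `θ` relative to the arc start `s` -/
def w (s θ : ℝ) : ℝ := toIcoMod htp 0 (s - θ)

lemma w_mem (s θ : ℝ) : w s θ ∈ Set.Ico (0:ℝ) (2 * Real.pi) := by
  simpa [w] using toIcoMod_mem_Ico htp 0 (s - θ)

lemma w_spec (s θ : ℝ) : ∃ n : ℤ, s - θ - w s θ = n * (2 * Real.pi) := by
  obtain ⟨n, hn⟩ : ∃ n : ℤ, (s - θ) - toIcoMod htp 0 (s - θ) = n • (2 * Real.pi) :=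
    ⟨_, (self_sub_toIcoMod htp 0 (s - θ))⟩
  exact ⟨n, by rw [w, hn]; simp [zsmul_eq_mul]⟩

lemma mem_arc_iff {s ℓ : ℝ} (hℓ : ℓ < 2 * Real.pi) (θ : ℝ) :
    ((θ : ℝ) : Circle2pi) ∈ arcSet s ℓ ↔ w s θ ≤ ℓ := by
  rw [mem_arc]
  constructor
  · rintro ⟨t, ht0, ht1, ht⟩
    obtain ⟨n, hn⟩ := coe_eq.mp ht
    have : w s θ = t := by
      rw [w, toIcoMod_eq_iff htp]
      exact ⟨by constructor <;> [exact ht0; linarith],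
        ⟨-n, by push_cast [zsmul_eq_mul]; linarith⟩⟩
    linarith [this]
  · intro hw
    obtain ⟨n, hn⟩ := w_spec s θ
    exact ⟨w s θ, (w_mem s θ).1, hw, coe_eq.mpr ⟨-n, by push_cast; linarith⟩⟩

lemma two_cover {V : Type*} (f : V → ℝ × ℝ) (hf1 : ∀ v, 0 < (f v).2 ∧ (f v).2 < 2 * Real.pi)
    (θ : ℝ) (s : Finset V)
    (hs : ∀ v ∈ s, ((θ : ℝ) : Circle2pi) ∈ arcSet (f v).1 (f v).2) :
    ∃ t : Finset V, t ⊆ s ∧ t.card ≤ 2 ∧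
      (⋃ v ∈ s, arcSet (f v).1 (f v).2) ⊆ ⋃ v ∈ t, arcSet (f v).1 (f v).2 := by
  classical
  rcases s.eq_empty_or_nonempty with rfl | hne
  · exact ⟨∅, Finset.Subset.refl _, by simp, by simp⟩
  obtain ⟨a, ha, hamax⟩ := s.exists_max_image (fun v => (f v).2 - w (f v).1 θ) hne
  obtain ⟨b, hb, hbmax⟩ := s.exists_max_image (fun v => w (f v).1 θ) hne
  refine ⟨{a, b}, ?_, ?_, ?_⟩
  · intro x hx; rcases Finset.mem_insert.mp hx with rfl | hx
    · exact ha
    · rcases Finset.mem_singleton.mp hx with rfl; exact hb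
  · exact (Finset.card_insert_le _ _).trans (by simp)
  · intro q hq
    simp only [Set.mem_iUnion] at hq ⊢
    obtain ⟨v, hv, hqv⟩ := hq
    obtain ⟨t0, ht0, ht1, rfl⟩ := mem_arc.mp hqv
    have hwv : w (f v).1 θ ≤ (f v).2 := (mem_arc_iff (hf1 v).2 θ).mp (hs v hv)
    obtain ⟨nv, hnv⟩ := w_spec (f v).1 θ
    rcases le_or_gt (w (f v).1 θ) t0 with hcase | hcase
    · -- covered by a
      refine ⟨a, by simp, ?_⟩
      have hwa : w (f a).1 θ ≤ (f a).2 := (mem_arc_iff (hf1 a).2 θ).mp (hs a ha)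
      obtain ⟨na, hna⟩ := w_spec (f a).1 θ
      have hmax := hamax v hv
      refine mem_arc.mpr ⟨w (f a).1 θ + (t0 - w (f v).1 θ), ?_, by linarith, ?_⟩
      · have := (w_mem (f a).1 θ).1; linarith
      · exact coe_eq.mpr ⟨nv - na, by push_cast; linarith⟩
    · -- covered by b
      refine ⟨b, by simp, ?_⟩
      have hwb : w (f b).1 θ ≤ (f b).2 := (mem_arc_iff (hf1 b).2 θ).mp (hs b hb)
      obtain ⟨nb, hnb⟩ := w_spec (f b).1 θ
      have hmax := hbmax v hv
      refine mem_arc.mpr ⟨w (f b).1 θ - (w (f v).1 θ - t0), by linarith, ?_, ?_⟩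
      · have := (w_mem (f b).1 θ).1; linarith
      · exact coe_eq.mpr ⟨nv - nb, by push_cast; linarith⟩

lemma inter_iff {su ℓu sv ℓv θ : ℝ}
    (hu1 : 0 < ℓu) (hu2 : ℓu < 2 * Real.pi) (hv1 : 0 < ℓv) (hv2 : ℓv < 2 * Real.pi)
    (hpu : ((θ : ℝ) : Circle2pi) ∉ arcSet su ℓu)
    (hpv : ((θ : ℝ) : Circle2pi) ∉ arcSet sv ℓv) :
    (arcSet su ℓu ∩ arcSet sv ℓv).Nonempty ↔
      (Set.Icc (2 * Real.pi - w su θ) (2 * Real.pi - w su θ + ℓu) ∩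
       Set.Icc (2 * Real.pi - w sv θ) (2 * Real.pi - w sv θ + ℓv)).Nonempty := by
  have hwu : ℓu < w su θ := by
    by_contra h; exact hpu ((mem_arc_iff hu2 θ).mpr (by linarith))
  have hwv : ℓv < w sv θ := by
    by_contra h; exact hpv ((mem_arc_iff hv2 θ).mpr (by linarith))
  have hwu2 := (w_mem su θ).2
  have hwv2 := (w_mem sv θ).2
  obtain ⟨nu, hnu⟩ := w_spec su θ
  obtain ⟨nv, hnv⟩ := w_spec sv θ
  constructor
  · rintro ⟨q, hq1, hq2⟩
    obtain ⟨t, ht0, ht1, rfl⟩ := mem_arc.mp hq1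
    obtain ⟨t', ht0', ht1', hq⟩ := mem_arc.mp hq2
    obtain ⟨n, hn⟩ := coe_eq.mp hq
    -- x = 2π - wu + t, y = 2π - wv + t' differ by a multiple of 2π and lie in (0,2π)
    have key : (2 * Real.pi - w su θ + t) - (2 * Real.pi - w sv θ + t') =
        ((nu - nv - n : ℤ) : ℝ) * (2 * Real.pi) := by push_cast; linarith
    have hx1 : 0 < 2 * Real.pi - w su θ + t := by linarith
    have hx2 : 2 * Real.pi - w su θ + t < 2 * Real.pi := by linarith
    have hy1 : 0 < 2 * Real.pi - w sv θ + t' := by linarith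
    have hy2 : 2 * Real.pi - w sv θ + t' < 2 * Real.pi := by linarith
    have hn0 : (nu - nv - n : ℤ) = 0 := by
      by_contra hne
      rcases lt_or_gt_of_ne hne with h | h
      · have h1 : ((nu - nv - n : ℤ) : ℝ) ≤ -1 := by exact_mod_cast Int.le_sub_one_iff.mpr h
        have := mul_le_mul_of_nonneg_right h1 (le_of_lt htp)
        linarith
      · have h1 : (1:ℝ) ≤ ((nu - nv - n : ℤ) : ℝ) := by exact_mod_cast h
        have := mul_le_mul_of_nonneg_right h1 (le_of_lt htp)
        linarith
    rw [hn0] at key; push_cast at key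
    refine ⟨2 * Real.pi - w su θ + t, ⟨by linarith, by linarith⟩, ⟨by linarith, by linarith⟩⟩
  · rintro ⟨x, ⟨hxu1, hxu2⟩, ⟨hxv1, hxv2⟩⟩
    refine ⟨((su - (x - (2 * Real.pi - w su θ)) : ℝ) : Circle2pi),
      mem_arc.mpr ⟨_, by linarith, by linarith, rfl⟩,
      mem_arc.mpr ⟨x - (2 * Real.pi - w sv θ), by linarith, by linarith, ?_⟩⟩
    exact coe_eq.mpr ⟨nu - nv, by push_cast; linarith⟩

end S19

/-- a circular arc graph admitting a representation whose minimum circular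
cover number exceeds 4 has boxicity at most 3. -/
theorem stmt19 {V : Type*} [Fintype V] (G : SimpleGraph V) (f : V → ℝ × ℝ)
    (hf : IsCARep G f)
    (hL : ∀ s : Finset V, (⋃ v ∈ s, arcSet (f v).1 (f v).2) = Set.univ → 4 < s.card) :
    BoxicityLE G 3 := by
  classical
  obtain ⟨hf1, hf2⟩ := hf
  set A : V → Set Circle2pi := fun v => arcSet (f v).1 (f v).2 with hA
  -- find second point
  have hθ2 : ∃ θ2 : ℝ, ∀ v, ((0:ℝ) : Circle2pi) ∈ A v → ((θ2:ℝ) : Circle2pi) ∉ A v := by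
    set s1 : Finset V := Finset.univ.filter (fun v => ((0:ℝ) : Circle2pi) ∈ A v) with hs1
    have hcov : (⋃ v ∈ s1, A v) ≠ Set.univ := by
      intro h
      obtain ⟨t, hts, htc, htu⟩ := S19.two_cover f hf1 0 s1
        (fun v hv => (Finset.mem_filter.mp hv).2)
      have h4 := hL t (Set.eq_univ_of_univ_subset (h ▸ htu))
      omega
    obtain ⟨p, hp⟩ := (Set.ne_univ_iff_exists_notMem _).mp hcov
    obtain ⟨θ2, rfl⟩ := QuotientAddGroup.mk_surjective p
    refine ⟨θ2, fun v hv hmem => hp ?_⟩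
    exact Set.mem_biUnion (Finset.mem_filter.mpr ⟨Finset.mem_univ v, hv⟩) hmem
  obtain ⟨θ2, h12⟩ := hθ2
  -- find third point
  have hθ3 : ∃ θ3 : ℝ, ∀ v,
      (((0:ℝ) : Circle2pi) ∈ A v ∨ ((θ2:ℝ) : Circle2pi) ∈ A v) →
      ((θ3:ℝ) : Circle2pi) ∉ A v := by
    set s1 : Finset V := Finset.univ.filter (fun v => ((0:ℝ) : Circle2pi) ∈ A v) with hs1
    set s2 : Finset V := Finset.univ.filter (fun v => ((θ2:ℝ) : Circle2pi) ∈ A v) with hs2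
    have hcov : (⋃ v ∈ s1 ∪ s2, A v) ≠ Set.univ := by
      intro h
      obtain ⟨t1, ht1s, ht1c, ht1u⟩ := S19.two_cover f hf1 0 s1
        (fun v hv => (Finset.mem_filter.mp hv).2)
      obtain ⟨t2, ht2s, ht2c, ht2u⟩ := S19.two_cover f hf1 θ2 s2
        (fun v hv => (Finset.mem_filter.mp hv).2)
      have hsub : (⋃ v ∈ s1 ∪ s2, A v) ⊆ ⋃ v ∈ t1 ∪ t2, A v := by
        intro q hq
        simp only [Set.mem_iUnion, Finset.mem_union] at hq ⊢
        obtain ⟨v, hv | hv, hqv⟩ := hq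
        · obtain ⟨u, hu, hqu⟩ := Set.mem_iUnion₂.mp (ht1u (Set.mem_biUnion hv hqv))
          exact ⟨u, Or.inl hu, hqu⟩
        · obtain ⟨u, hu, hqu⟩ := Set.mem_iUnion₂.mp (ht2u (Set.mem_biUnion hv hqv))
          exact ⟨u, Or.inr hu, hqu⟩
      have h4 := hL (t1 ∪ t2) (Set.eq_univ_of_univ_subset (h ▸ hsub))
      have := Finset.card_union_le t1 t2
      omega
    obtain ⟨p, hp⟩ := (Set.ne_univ_iff_exists_notMem _).mp hcov
    obtain ⟨θ3, rfl⟩ := QuotientAddGroup.mk_surjective p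
    refine ⟨θ3, fun v hv hmem => hp ?_⟩
    refine Set.mem_biUnion (Finset.mem_union.mpr ?_) hmem
    rcases hv with hv | hv
    · exact Or.inl (Finset.mem_filter.mpr ⟨Finset.mem_univ v, hv⟩)
    · exact Or.inr (Finset.mem_filter.mpr ⟨Finset.mem_univ v, hv⟩)
  obtain ⟨θ3, h3⟩ := hθ3
  have h13 : ∀ v, ((0:ℝ) : Circle2pi) ∈ A v → ((θ3:ℝ) : Circle2pi) ∉ A v :=
    fun v hv => h3 v (Or.inl hv)
  have h23 : ∀ v, ((θ2:ℝ) : Circle2pi) ∈ A v → ((θ3:ℝ) : Circle2pi) ∉ A v :=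
    fun v hv => h3 v (Or.inr hv)
  set Θ : Fin 3 → ℝ := ![0, θ2, θ3] with hΘ
  have hchoose : ∀ u v : V, ∃ i : Fin 3,
      ((Θ i : ℝ) : Circle2pi) ∉ A u ∧ ((Θ i : ℝ) : Circle2pi) ∉ A v := by
    intro u v
    by_contra hcon
    push_neg at hcon
    have g : ∀ i : Fin 3, ((Θ i : ℝ) : Circle2pi) ∈ A u ∨ ((Θ i : ℝ) : Circle2pi) ∈ A v := by
      intro i
      by_cases h : ((Θ i : ℝ) : Circle2pi) ∈ A u
      · exact Or.inl h
      · exact Or.inr (hcon i h)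
    have g0 := g 0; have g1 := g 1; have g2 := g 2
    simp only [hΘ, Matrix.cons_val_zero, Matrix.cons_val_one, Matrix.head_cons,
      Matrix.cons_val_two, Matrix.tail_cons] at g0 g1 g2
    rcases g0 with h0 | h0 <;> rcases g1 with h1 | h1 <;> rcases g2 with h2 | h2 <;>
      first
        | exact h12 u h0 h1 | exact h12 v h0 h1
        | exact h13 u h0 h2 | exact h13 v h0 h2
        | exact h23 u h1 h2 | exact h23 v h1 h2
  set I : Fin 3 → V → Set ℝ := fun i v =>
    if ((Θ i : ℝ) : Circle2pi) ∈ A v then Set.Icc 0 (2 * Real.pi)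
    else Set.Icc (2 * Real.pi - S19.w (f v).1 (Θ i))
      (2 * Real.pi - S19.w (f v).1 (Θ i) + (f v).2) with hI
  refine ⟨I, ?_, ?_⟩
  · intro i v
    by_cases h : ((Θ i : ℝ) : Circle2pi) ∈ A v
    · exact ⟨0, 2 * Real.pi, by positivity, by simp only [hI]; rw [if_pos h]⟩
    · exact ⟨2 * Real.pi - S19.w (f v).1 (Θ i), 2 * Real.pi - S19.w (f v).1 (Θ i) + (f v).2,
        by linarith [(hf1 v).1], by simp only [hI]; rw [if_neg h]⟩
  · intro u v huv
    rw [hf2 u v huv]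
    constructor
    · rintro hne i
      by_cases h1 : ((Θ i : ℝ) : Circle2pi) ∈ A u <;>
        by_cases h2 : ((Θ i : ℝ) : Circle2pi) ∈ A v
      · refine ⟨0, ?_⟩
        simp only [hI]
        rw [Set.mem_inter_iff, if_pos h1, if_pos h2]
        have : (0:ℝ) ∈ Set.Icc 0 (2 * Real.pi) := ⟨le_refl _, by positivity⟩
        exact ⟨this, this⟩
      · refine ⟨2 * Real.pi - S19.w (f v).1 (Θ i), ?_⟩
        simp only [hI]
        rw [Set.mem_inter_iff, if_pos h1, if_neg h2]
        have hm := S19.w_mem (f v).1 (Θ i)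
        exact ⟨⟨by linarith [hm.2], by linarith [hm.1]⟩,
          ⟨le_refl _, by linarith [(hf1 v).1]⟩⟩
      · refine ⟨2 * Real.pi - S19.w (f u).1 (Θ i), ?_⟩
        simp only [hI]
        rw [Set.mem_inter_iff, if_neg h1, if_pos h2]
        have hm := S19.w_mem (f u).1 (Θ i)
        exact ⟨⟨le_refl _, by linarith [(hf1 u).1]⟩,
          ⟨by linarith [hm.2], by linarith [hm.1]⟩⟩
      · simp only [hI]
        rw [if_neg h1, if_neg h2]
        exact (S19.inter_iff (hf1 u).1 (hf1 u).2 (hf1 v).1 (hf1 v).2 h1 h2).mp hne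
    · intro h
      obtain ⟨i, hiu, hiv⟩ := hchoose u v
      have hi := h i
      simp only [hI] at hi
      rw [if_neg hiu, if_neg hiv] at hi
      exact (S19.inter_iff (hf1 u).1 (hf1 u).2 (hf1 v).1 (hf1 v).2 hiu hiv).mpr hi

end
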